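/- Let d ≥ 1 be a natural number and let r > 0, ρ ≥ 0, t > 0, k > 0, N > 0, ε > 0 be real numbers. Let X₁, …, X_d and Y be real-valued random variables on a probability space such that for each i, X_i and Y are independent, each of X₁, …, X_d and Y has mean 0 and variance 2·((d·r+1)·t/ε)² (the variance of Laplace noise with scale (d·r+1)·t/ε), and all are square-integrable. Set C = N/k and S_i = 2·ρ·r·C for each i. Then ∑_{i=1}^{d} E[((C·X_i − S_i·Y)/C²)²] = 2·d·(1+(2·ρ·r)²)·(k·t·(d·r+1)/(N·ε))². -/

import Mathlib

open MeasureTheory ProbabilityTheory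

/-- Exact computation underlying Proposition 1 (MSE of one DPLloyd iteration). -/
theorem dplloyd_mse_exact
    {Ω : Type*} [MeasurableSpace Ω] (μ : Measure Ω) [IsProbabilityMeasure μ]
    (d : ℕ) (hd : 1 ≤ d) (r ρ t k N ε : ℝ)
    (hr : 0 < r) (hρ : 0 ≤ ρ) (ht : 0 < t) (hk : 0 < k) (hN : 0 < N) (hε : 0 < ε)
    (X : Fin d → Ω → ℝ) (Y : Ω → ℝ)
    (hindep : ∀ i, IndepFun (X i) Y μ)
    (hXmean : ∀ i, ∫ ω, X i ω ∂μ = 0) (hYmean : ∫ ω, Y ω ∂μ = 0)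
    (hXvar : ∀ i, variance (X i) μ = 2 * (((d : ℝ) * r + 1) * t / ε) ^ 2)
    (hYvar : variance Y μ = 2 * (((d : ℝ) * r + 1) * t / ε) ^ 2)
    (hXsq : ∀ i, MemLp (X i) 2 μ) (hYsq : MemLp Y 2 μ)
    (C : ℝ) (hC : C = N / k) (S : Fin d → ℝ) (hS : ∀ i, S i = 2 * ρ * r * C) :
    ∑ i : Fin d, ∫ ω, ((C * X i ω - S i * Y ω) / C ^ 2) ^ 2 ∂μ
      = 2 * (d : ℝ) * (1 + (2 * ρ * r) ^ 2)
        * (k * t * ((d : ℝ) * r + 1) / (N * ε)) ^ 2 := by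
  set σ2 : ℝ := 2 * (((d : ℝ) * r + 1) * t / ε) ^ 2 with hσ2
  have hC0 : C ≠ 0 := by
    rw [hC]; positivity
  have hX2 : ∀ i, ∫ ω, X i ω ^ 2 ∂μ = σ2 := by
    intro i
    have := variance_eq_sub (hXsq i)
    rw [hXvar i, hXmean i] at this
    have h2 : ∫ ω, X i ω ^ 2 ∂μ = μ[X i ^ 2] := by rfl
    simpa using this.symm
  have hY2 : ∫ ω, Y ω ^ 2 ∂μ = σ2 := by
    have := variance_eq_sub hYsq
    rw [hYvar, hYmean] at this
    simpa using this.symm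
  have hXY : ∀ i, ∫ ω, X i ω * Y ω ∂μ = 0 := by
    intro i
    have := (hindep i).integral_mul_eq_mul_integral ((hXsq i).integrable one_le_two).aestronglyMeasurable
      (hYsq.integrable one_le_two).aestronglyMeasurable
    rw [show (fun ω => X i ω * Y ω) = X i * Y from rfl, this, hXmean i, zero_mul]
  have key : ∀ i : Fin d, ∫ ω, ((C * X i ω - S i * Y ω) / C ^ 2) ^ 2 ∂μ
      = (C ^ 2 * σ2 + (S i) ^ 2 * σ2) / C ^ 4 := by
    intro i
    have hiX2 : Integrable (fun ω => X i ω ^ 2) μ := (hXsq i).integrable_sq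
    have hiY2 : Integrable (fun ω => Y ω ^ 2) μ := hYsq.integrable_sq
    have hiXY : Integrable (fun ω => X i ω * Y ω) μ :=
      (hindep i).integrable_mul ((hXsq i).integrable one_le_two) (hYsq.integrable one_le_two)
    have expand : ∀ ω, ((C * X i ω - S i * Y ω) / C ^ 2) ^ 2
        = (C ^ 2 / C ^ 4) * X i ω ^ 2 + (S i ^ 2 / C ^ 4) * Y ω ^ 2
          - (2 * C * S i / C ^ 4) * (X i ω * Y ω) := by
      intro ω; field_simp; ring
    have h1 : Integrable (fun ω => C ^ 2 / C ^ 4 * X i ω ^ 2 + S i ^ 2 / C ^ 4 * Y ω ^ 2) μ :=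
      (hiX2.const_mul _).add (hiY2.const_mul _)
    have h2 : Integrable (fun ω => (2 * C * S i / C ^ 4) * (X i ω * Y ω)) μ := hiXY.const_mul _
    rw [integral_congr_ae (Filter.Eventually.of_forall expand),
      integral_sub h1 h2, integral_add (hiX2.const_mul _) (hiY2.const_mul _),
      integral_const_mul, integral_const_mul, integral_const_mul,
      hX2 i, hY2, hXY i]
    ring
  rw [Finset.sum_congr rfl (fun i _ => key i)]
  simp only [hS]
  rw [Finset.sum_const, Finset.card_univ, Fintype.card_fin, nsmul_eq_mul, hC, hσ2]
  field_simp
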